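/- arXiv:1602.03938 — 3 statements merged into one kernel-verified Lean document; each statement's English description precedes it below -/
import Mathlib

section
/- For q ≥ 4 and a finite set Z = {z_1,…,z_m} ⊆ ℝ^p, the function D_q(z; Z) is β̄-smooth on conv(Z) with β̄ = (q-1)(q-2)·max_{j=1,…,m} D_{q-2}(z_j; Z), i.e., ‖∇D_q(z; Z) − ∇D_q(z'; Z)‖₂ ≤ β̄‖z − z'‖₂ for all z, z' ∈ conv(Z). -/
open scoped BigOperators RealInnerProductSpace

section Aux

variable {E : Type*} [NormedAddCommGroup E] [InnerProductSpace ℝ E]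

private lemma Dq_norm_sq_rpow (u : E) (s : ℝ) : (‖u‖ ^ (2:ℕ) : ℝ) ^ s = ‖u‖ ^ (2 * s) := by
  rw [← Real.rpow_natCast ‖u‖ 2, ← Real.rpow_mul (norm_nonneg u)]
  norm_num

private lemma Dq_hasFDerivAt_norm_rpow (r : ℝ) (hr : 2 ≤ r) (a w : E) :
    HasFDerivAt (fun w : E => ‖w - a‖ ^ r)
      ((r * ‖w - a‖ ^ (r - 2)) • (innerSL ℝ (w - a))) w := by
  have hid : HasFDerivAt (fun w : E => w - a) (ContinuousLinearMap.id ℝ E) w :=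
    (hasFDerivAt_id w).sub_const a
  have hin := hid.inner ℝ hid
  have hr2 : HasDerivAt (fun t : ℝ => t ^ (r / 2))
      ((r / 2) * (⟪w - a, w - a⟫) ^ (r / 2 - 1)) (⟪w - a, w - a⟫) :=
    Real.hasDerivAt_rpow_const (Or.inr (by linarith))
  have hcomp := hr2.comp_hasFDerivAt w hin
  convert hcomp using 1
  · rfl
  · rfl
  · funext x
    show _ = (⟪x - a, x - a⟫ : ℝ) ^ (r/2)
    rw [real_inner_self_eq_norm_sq]
    rw [show (‖x - a‖^2 : ℝ) = ‖x - a‖^(2:ℕ) by norm_num, Dq_norm_sq_rpow,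
      show 2 * (r / 2) = r by ring]
  · ext v
    simp only [ContinuousLinearMap.smul_apply, innerSL_apply_apply, ContinuousLinearMap.coe_smul',
      Pi.smul_apply, ContinuousLinearMap.coe_comp', Function.comp_apply,
      fderivInnerCLM_apply, ContinuousLinearMap.prod_apply, ContinuousLinearMap.coe_id', id_eq]
    rw [real_inner_self_eq_norm_sq, show (‖w - a‖^2 : ℝ) = ‖w - a‖^(2:ℕ) by norm_num,
      Dq_norm_sq_rpow, real_inner_comm v (w - a)]
    rw [show 2 * (r / 2 - 1) = r - 2 by ring]
    simp [smul_eq_mul]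
    ring

/-- The derivative of `u ↦ ‖u‖^r • u` evaluated at `u`, as a continuous linear map. -/
noncomputable def DqLmap (r : ℝ) (u : E) : E →L[ℝ] E :=
  ‖u‖ ^ r • ContinuousLinearMap.id ℝ E + ((r * ‖u‖ ^ (r - 2)) • innerSL ℝ u).smulRight u

private lemma Dq_hasFDerivAt_h (r : ℝ) (hr : 2 ≤ r) (a w : E) :
    HasFDerivAt (fun w : E => ‖w - a‖ ^ r • (w - a)) (DqLmap r (w - a)) w :=
  (Dq_hasFDerivAt_norm_rpow r hr a w).smul ((hasFDerivAt_id w).sub_const a)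

private lemma Dq_Lmap_norm (r : ℝ) (hr : 2 ≤ r) (u : E) :
    ‖DqLmap r u‖ ≤ (r + 1) * ‖u‖ ^ r := by
  have hrn : (0:ℝ) ≤ ‖u‖ ^ r := Real.rpow_nonneg (norm_nonneg u) r
  have hrn2 : (0:ℝ) ≤ ‖u‖ ^ (r - 2) := Real.rpow_nonneg (norm_nonneg u) _
  refine ContinuousLinearMap.opNorm_le_bound _ (mul_nonneg (by linarith) hrn) fun v => ?_
  have hkey : ‖u‖ ^ (r - 2) * ‖u‖ * ‖u‖ = ‖u‖ ^ r := by
    rcases eq_or_ne u 0 with h | h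
    · simp [h, Real.zero_rpow (by linarith : r ≠ (0:ℝ))]
    · have hpos : (0:ℝ) < ‖u‖ := norm_pos_iff.mpr h
      have h2 : ‖u‖ * ‖u‖ = ‖u‖ ^ ((2:ℕ):ℝ) := by
        rw [Real.rpow_natCast]; ring
      rw [mul_assoc, h2, ← Real.rpow_add hpos]
      norm_num
  have happ : DqLmap r u v = ‖u‖ ^ r • v + (r * ‖u‖ ^ (r - 2) * ⟪u, v⟫) • u := by
    simp [DqLmap, smul_smul]
  rw [happ]
  have h1 : ‖(‖u‖ ^ r) • v‖ = ‖u‖ ^ r * ‖v‖ := by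
    rw [norm_smul, Real.norm_eq_abs, abs_of_nonneg hrn]
  have h2 : ‖(r * ‖u‖ ^ (r - 2) * ⟪u, v⟫) • u‖ ≤ r * ‖u‖ ^ (r - 2) * (‖u‖ * ‖v‖) * ‖u‖ := by
    rw [norm_smul, Real.norm_eq_abs, abs_mul, abs_mul]
    rw [abs_of_nonneg (by linarith : (0:ℝ) ≤ r), abs_of_nonneg hrn2]
    have := abs_real_inner_le_norm u v
    have hru : (0:ℝ) ≤ r * ‖u‖ ^ (r - 2) := mul_nonneg (by linarith) hrn2
    nlinarith [norm_nonneg u, mul_le_mul_of_nonneg_left this hru]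
  calc ‖(‖u‖ ^ r) • v + (r * ‖u‖ ^ (r - 2) * ⟪u, v⟫) • u‖
      ≤ ‖(‖u‖ ^ r) • v‖ + ‖(r * ‖u‖ ^ (r - 2) * ⟪u, v⟫) • u‖ := norm_add_le _ _
    _ ≤ ‖u‖ ^ r * ‖v‖ + r * ‖u‖ ^ (r - 2) * (‖u‖ * ‖v‖) * ‖u‖ := by rw [h1]; linarith
    _ = (r + 1) * ‖u‖ ^ r * ‖v‖ := by
        rw [show r * ‖u‖ ^ (r-2) * (‖u‖*‖v‖) * ‖u‖
            = r * (‖u‖^(r-2) * ‖u‖ * ‖u‖) * ‖v‖ by ring, hkey]; ring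

private lemma Dq_convexOn_norm_sub_rpow (r : ℝ) (hr : 1 ≤ r) (a : E) :
    ConvexOn ℝ Set.univ fun w : E => ‖w - a‖ ^ r := by
  refine ⟨convex_univ, ?_⟩
  intro x _ y _ s t hs ht hst
  have h1 : ‖s • x + t • y - a‖ ≤ s * ‖x - a‖ + t * ‖y - a‖ := by
    have heq : s • x + t • y - a = s • (x - a) + t • (y - a) := by
      have : s • (x - a) + t • (y - a) = s • x + t • y - (s + t) • a := by module
      rw [this, hst, one_smul]
    rw [heq]
    calc ‖s • (x - a) + t • (y - a)‖ ≤ ‖s • (x - a)‖ + ‖t • (y - a)‖ := norm_add_le _ _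
      _ = s * ‖x - a‖ + t * ‖y - a‖ := by
          rw [norm_smul, norm_smul, Real.norm_eq_abs, Real.norm_eq_abs,
            abs_of_nonneg hs, abs_of_nonneg ht]
  calc ‖s • x + t • y - a‖ ^ r ≤ (s * ‖x - a‖ + t * ‖y - a‖) ^ r :=
        Real.rpow_le_rpow (norm_nonneg _) h1 (by linarith)
    _ ≤ s * ‖x - a‖ ^ r + t * ‖y - a‖ ^ r :=
        (convexOn_rpow hr).2 (Set.mem_Ici.mpr (norm_nonneg _))
          (Set.mem_Ici.mpr (norm_nonneg _)) hs ht hst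

private lemma Dq_convexOn_univ_finset_sum {ι : Type*} (t : Finset ι) (f : ι → E → ℝ)
    (h : ∀ i ∈ t, ConvexOn ℝ Set.univ (f i)) :
    ConvexOn ℝ Set.univ (fun w => ∑ i ∈ t, f i w) := by
  classical
  induction t using Finset.induction with
  | empty => simpa using convexOn_const (0:ℝ) convex_univ
  | @insert a t hnot ih =>
      have := (h a (Finset.mem_insert_self a t)).add
        (ih fun i hi => h i (Finset.mem_insert_of_mem hi))
      simp only [Finset.sum_insert hnot]
      exact this

private lemma Dq_max_principle (r : ℝ) (hr : 1 ≤ r) {m : ℕ} (Z : Fin m → E)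
    {w : E} (hw : w ∈ convexHull ℝ (Set.range Z)) :
    ∃ j : Fin m, (∑ i, ‖w - Z i‖ ^ r) ≤ ∑ i, ‖Z j - Z i‖ ^ r := by
  have hconv : ConvexOn ℝ Set.univ (fun w : E => ∑ i, ‖w - Z i‖ ^ r) :=
    Dq_convexOn_univ_finset_sum _ _ fun i _ => Dq_convexOn_norm_sub_rpow r hr (Z i)
  obtain ⟨y, hy, hle⟩ := hconv.exists_ge_of_mem_convexHull (Set.subset_univ _) hw
  obtain ⟨j, rfl⟩ := hy
  exact ⟨j, hle⟩

end Aux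

/-- For q ≥ 4, D_q(·; Z) is β̄-smooth on conv(Z) with
β̄ = (q-1)(q-2)·max_j D_{q-2}(z_j; Z): the gradient is β̄-Lipschitz on conv(Z). -/
theorem Dq_smooth_on_convexHull {p m : ℕ} (q : ℝ) (hq : 4 ≤ q)
    (Z : Fin m → EuclideanSpace ℝ (Fin p)) (hm : 0 < m) :
    ∀ z ∈ convexHull ℝ (Set.range Z), ∀ z' ∈ convexHull ℝ (Set.range Z),
      ‖gradient (fun w : EuclideanSpace ℝ (Fin p) =>
            (1 / (m * q)) * ∑ i, ‖w - Z i‖ ^ q) z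
        - gradient (fun w : EuclideanSpace ℝ (Fin p) =>
            (1 / (m * q)) * ∑ i, ‖w - Z i‖ ^ q) z'‖
      ≤ ((q - 1) * (q - 2) *
          ⨆ j : Fin m, (1 / (m * (q - 2))) * ∑ i, ‖Z j - Z i‖ ^ (q - 2)) *
        ‖z - z'‖ := by
  intro z hz z' hz'
  haveI : Nonempty (Fin m) := ⟨⟨0, hm⟩⟩
  have hmR : (0:ℝ) < (m:ℝ) := by exact_mod_cast hm
  have hq0 : q ≠ 0 := by linarith
  have hq2 : (2:ℝ) ≤ q - 2 := by linarith
  -- the gradient function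
  set G : EuclideanSpace ℝ (Fin p) → EuclideanSpace ℝ (Fin p) :=
    fun w => ∑ i, (m:ℝ)⁻¹ • (‖w - Z i‖ ^ (q - 2) • (w - Z i)) with hG_def
  -- G is the gradient everywhere
  have hgrad : ∀ w : EuclideanSpace ℝ (Fin p), HasGradientAt
      (fun w : EuclideanSpace ℝ (Fin p) => (1 / (m * q)) * ∑ i, ‖w - Z i‖ ^ q) (G w) w := by
    intro w
    have hfD : HasFDerivAt
        (fun w : EuclideanSpace ℝ (Fin p) => (1 / ((m:ℝ) * q)) * ∑ i, ‖w - Z i‖ ^ q)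
        ((1 / ((m:ℝ) * q)) • ∑ i : Fin m, (q * ‖w - Z i‖ ^ (q - 2)) • innerSL ℝ (w - Z i)) w :=
      (HasFDerivAt.fun_sum fun i _ =>
        Dq_hasFDerivAt_norm_rpow q (by linarith) (Z i) w).const_mul _
    rw [hasGradientAt_iff_hasFDerivAt]
    convert hfD using 1
    · rfl
    · rfl
    ext v
    simp only [InnerProductSpace.toDual_apply_apply, hG_def, sum_inner, real_inner_smul_left,
      ContinuousLinearMap.smul_apply, ContinuousLinearMap.sum_apply, innerSL_apply_apply,
      smul_eq_mul, Finset.mul_sum]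
    refine Finset.sum_congr rfl fun i _ => ?_
    field_simp
  -- derivative of G
  have hG' : ∀ w : EuclideanSpace ℝ (Fin p),
      HasFDerivAt G (∑ i : Fin m, (m:ℝ)⁻¹ • DqLmap (q - 2) (w - Z i)) w := fun w =>
    HasFDerivAt.fun_sum fun i _ => (Dq_hasFDerivAt_h (q - 2) hq2 (Z i) w).fun_const_smul _
  -- choose the maximizing index j0
  obtain ⟨j0, _, hj0⟩ := Finset.exists_max_image (Finset.univ : Finset (Fin m))
    (fun j => ∑ i, ‖Z j - Z i‖ ^ (q - 2)) ⟨⟨0, hm⟩, Finset.mem_univ _⟩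
  have hcoef : (0:ℝ) < 1 / ((m:ℝ) * (q - 2)) := by
    have : (0:ℝ) < q - 2 := by linarith
    positivity
  -- identify the sup
  have hsup : (⨆ j : Fin m, (1 / ((m:ℝ) * (q - 2))) * ∑ i, ‖Z j - Z i‖ ^ (q - 2))
      = (1 / ((m:ℝ) * (q - 2))) * ∑ i, ‖Z j0 - Z i‖ ^ (q - 2) := by
    apply le_antisymm
    · exact ciSup_le fun j =>
        mul_le_mul_of_nonneg_left (hj0 j (Finset.mem_univ j)) hcoef.le
    · exact le_ciSup (f := fun j : Fin m => (1 / ((m:ℝ) * (q - 2))) * ∑ i, ‖Z j - Z i‖ ^ (q - 2))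
        (Set.Finite.bddAbove (Set.finite_range _)) j0
  -- the Lipschitz constant
  set C : ℝ := (q - 1) / m * ∑ i, ‖Z j0 - Z i‖ ^ (q - 2) with hC_def
  have hCeq : ((q - 1) * (q - 2) *
      ⨆ j : Fin m, (1 / ((m:ℝ) * (q - 2))) * ∑ i, ‖Z j - Z i‖ ^ (q - 2)) = C := by
    rw [hsup, hC_def]
    have hq2ne : q - 2 ≠ 0 := by linarith
    field_simp
  -- bound the derivative of G on the convex hull
  have hbound : ∀ w ∈ convexHull ℝ (Set.range Z),
      ‖∑ i : Fin m, (m:ℝ)⁻¹ • DqLmap (q - 2) (w - Z i)‖ ≤ C := by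
    intro w hw
    obtain ⟨j, hj⟩ := Dq_max_principle (q - 2) (by linarith) Z hw
    calc ‖∑ i : Fin m, (m:ℝ)⁻¹ • DqLmap (q - 2) (w - Z i)‖
        ≤ ∑ i : Fin m, ‖(m:ℝ)⁻¹ • DqLmap (q - 2) (w - Z i)‖ := norm_sum_le _ _
      _ ≤ ∑ i : Fin m, (m:ℝ)⁻¹ * ((q - 1) * ‖w - Z i‖ ^ (q - 2)) := by
          refine Finset.sum_le_sum fun i _ => ?_
          have hL := Dq_Lmap_norm (q - 2) hq2 (w - Z i)
          rw [show q - 2 + 1 = q - 1 by ring] at hL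
          have hns : ‖(m:ℝ)⁻¹ • DqLmap (q - 2) (w - Z i)‖
              = (m:ℝ)⁻¹ * ‖DqLmap (q - 2) (w - Z i)‖ := by
            rw [norm_smul ((m:ℝ)⁻¹) (DqLmap (q - 2) (w - Z i)), Real.norm_eq_abs,
              abs_of_nonneg (by positivity)]
          rw [hns]
          exact mul_le_mul_of_nonneg_left hL (by positivity)
      _ = (q - 1) / m * ∑ i, ‖w - Z i‖ ^ (q - 2) := by
          rw [Finset.mul_sum]; refine Finset.sum_congr rfl fun i _ => ?_; ring
      _ ≤ (q - 1) / m * ∑ i, ‖Z j - Z i‖ ^ (q - 2) := by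
          apply mul_le_mul_of_nonneg_left hj
          have : (0:ℝ) < q - 1 := by linarith
          positivity
      _ ≤ C := by
          rw [hC_def]
          apply mul_le_mul_of_nonneg_left (hj0 j (Finset.mem_univ j))
          have : (0:ℝ) < q - 1 := by linarith
          positivity
  -- mean value inequality
  have hMV : ‖G z - G z'‖ ≤ C * ‖z - z'‖ :=
    (convex_convexHull ℝ (Set.range Z)).norm_image_sub_le_of_norm_hasFDerivWithin_le
      (fun w _ => (hG' w).hasFDerivWithinAt) hbound hz' hz
  rw [(hgrad z).gradient, (hgrad z').gradient, hCeq]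
  exact hMV
end

section
/- For q ≥ 4 and a finite set Z = {z_1,…,z_m} ⊆ ℝ^p with not all points equal, the function D_q(z; Z) is μ̄-strongly convex on conv(Z) with μ̄ = (q-2)·D_{q-2}(C_{q-2}(Z); Z) > 0, i.e., (∇D_q(z) − ∇D_q(z'))^T(z − z') ≥ μ̄‖z − z'‖₂² for all z, z' ∈ conv(Z). -/
open scoped BigOperators RealInnerProductSpace

section Aux

variable {E : Type*} [NormedAddCommGroup E] [InnerProductSpace ℝ E] [CompleteSpace E]

lemma hasFDerivAt_norm_rpow_sub (q : ℝ) (hq : 4 ≤ q) (z w : E) :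
    HasFDerivAt (fun w : E => ‖w - z‖ ^ q)
      ((q * ‖w - z‖ ^ (q - 2)) • (innerSL ℝ (w - z))) w := by
  have h := (hasFDerivAt_norm_rpow (w - z) (p := q) (by linarith)).comp w
    ((hasFDerivAt_id w).sub_const z)
  simpa [Function.comp_def] using h

lemma key_ineq (r : ℝ) (hr : 0 ≤ r) (a b : E) :
    ((‖a‖ ^ r + ‖b‖ ^ r) / 2) * ‖a - b‖ ^ 2
      ≤ ⟪(‖a‖ ^ r) • a - (‖b‖ ^ r) • b, a - b⟫ := by
  have h1 : 0 ≤ (‖a‖ ^ r - ‖b‖ ^ r) * (‖a‖ ^ 2 - ‖b‖ ^ 2) := by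
    rcases le_total ‖a‖ ‖b‖ with h | h
    · have h2 := Real.rpow_le_rpow (norm_nonneg a) h hr
      have h3 := pow_le_pow_left₀ (norm_nonneg a) h 2
      nlinarith
    · have h2 := Real.rpow_le_rpow (norm_nonneg b) h hr
      have h3 := pow_le_pow_left₀ (norm_nonneg b) h 2
      nlinarith
  have hexp : ⟪(‖a‖ ^ r) • a - (‖b‖ ^ r) • b, a - b⟫
      = ‖a‖ ^ r * ‖a‖ ^ 2 + ‖b‖ ^ r * ‖b‖ ^ 2 - (‖a‖ ^ r + ‖b‖ ^ r) * ⟪a, b⟫ := by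
    rw [inner_sub_left, inner_sub_right, inner_sub_right, real_inner_smul_left,
      real_inner_smul_left, real_inner_smul_left, real_inner_smul_left,
      real_inner_self_eq_norm_sq, real_inner_self_eq_norm_sq, real_inner_comm b a]
    ring
  have hnorm : ‖a - b‖ ^ 2 = ‖a‖ ^ 2 - 2 * ⟪a, b⟫ + ‖b‖ ^ 2 := by
    rw [@norm_sub_sq_real]
  rw [hexp, hnorm]
  nlinarith [h1]

end Aux

/-- For q ≥ 4 and Z with not all points equal, D_q(·; Z) is
μ̄-strongly convex on conv(Z) with μ̄ = (q-2)·D_{q-2}(C_{q-2}(Z); Z) > 0,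
where C_{q-2}(Z) is the minimizer of D_{q-2}(·; Z). -/
theorem Dq_strongly_convex_on_convexHull {p m : ℕ} (q : ℝ) (hq : 4 ≤ q)
    (Z : Fin m → EuclideanSpace ℝ (Fin p)) (hm : 0 < m)
    (hdist : ∃ i j, Z i ≠ Z j)
    (c : EuclideanSpace ℝ (Fin p))
    (hc : ∀ z : EuclideanSpace ℝ (Fin p),
      (1 / (m * (q - 2))) * ∑ i, ‖c - Z i‖ ^ (q - 2)
        ≤ (1 / (m * (q - 2))) * ∑ i, ‖z - Z i‖ ^ (q - 2)) :
    0 < (q - 2) * ((1 / (m * (q - 2))) * ∑ i, ‖c - Z i‖ ^ (q - 2)) ∧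
    ∀ z ∈ convexHull ℝ (Set.range Z), ∀ z' ∈ convexHull ℝ (Set.range Z),
      ((q - 2) * ((1 / (m * (q - 2))) * ∑ i, ‖c - Z i‖ ^ (q - 2))) * ‖z - z'‖ ^ 2
        ≤ ⟪gradient (fun w : EuclideanSpace ℝ (Fin p) =>
              (1 / (m * q)) * ∑ i, ‖w - Z i‖ ^ q) z
            - gradient (fun w : EuclideanSpace ℝ (Fin p) =>
              (1 / (m * q)) * ∑ i, ‖w - Z i‖ ^ q) z',
            z - z'⟫ := by
  have hq0 : (0:ℝ) < q := by linarith
  have hq2 : (0:ℝ) < q - 2 := by linarith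
  have hm' : (0:ℝ) < m := by exact_mod_cast hm
  have hconst : (0:ℝ) < 1 / (m * (q - 2)) := by positivity
  set Sc := ∑ i, ‖c - Z i‖ ^ (q - 2) with hSc_def
  -- c is a global minimizer of the sum
  have hc' : ∀ z : EuclideanSpace ℝ (Fin p), Sc ≤ ∑ i, ‖z - Z i‖ ^ (q - 2) := by
    intro z
    have := hc z
    exact le_of_mul_le_mul_left (by linarith [this]) hconst
  -- positivity of Sc
  have hScpos : 0 < Sc := by
    obtain ⟨i, j, hij⟩ := hdist
    have hne : c ≠ Z i ∨ c ≠ Z j := by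
      by_contra h
      push_neg at h
      exact hij (h.1 ▸ h.2 ▸ rfl)
    obtain ⟨i0, hi0⟩ : ∃ i0, c ≠ Z i0 := by rcases hne with h | h; exacts [⟨i, h⟩, ⟨j, h⟩]
    apply Finset.sum_pos'
    · intro k _; exact Real.rpow_nonneg (norm_nonneg _) _
    · refine ⟨i0, Finset.mem_univ _, ?_⟩
      exact Real.rpow_pos_of_pos (norm_pos_iff.mpr (sub_ne_zero.mpr hi0)) _
  constructor
  · positivity
  · intro z _ z' _
    -- gradient formula
    have hgrad : ∀ w : EuclideanSpace ℝ (Fin p),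
        gradient (fun w : EuclideanSpace ℝ (Fin p) =>
          (1 / (m * q)) * ∑ i, ‖w - Z i‖ ^ q) w
        = (1 / (m * q)) • ∑ i, (q * ‖w - Z i‖ ^ (q - 2)) • (w - Z i) := by
      intro w
      have hfd : HasFDerivAt (fun w : EuclideanSpace ℝ (Fin p) =>
          (1 / (m * q)) * ∑ i, ‖w - Z i‖ ^ q)
          ((1 / (m * q) : ℝ) • ∑ i, (q * ‖w - Z i‖ ^ (q - 2)) • (innerSL ℝ (w - Z i))) w := by
        exact (HasFDerivAt.fun_sum (fun i _ => hasFDerivAt_norm_rpow_sub q hq (Z i) w)).const_mul _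
      have heq : ((1 / (m * q) : ℝ) • ∑ i, (q * ‖w - Z i‖ ^ (q - 2)) • (innerSL ℝ (w - Z i)))
          = (InnerProductSpace.toDual ℝ (EuclideanSpace ℝ (Fin p)))
              ((1 / (m * q) : ℝ) • ∑ i, (q * ‖w - Z i‖ ^ (q - 2)) • (w - Z i)) := by
        ext u
        simp [InnerProductSpace.toDual_apply_apply, inner_smul_left, inner_sum, innerSL_apply_apply,
          Finset.mul_sum]
      rw [heq] at hfd
      have h2 := hfd.hasGradientAt.gradient
      simpa using h2
    rw [hgrad z, hgrad z']
    set Sz := ∑ i, ‖z - Z i‖ ^ (q - 2) with hSz_def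
    set Sz' := ∑ i, ‖z' - Z i‖ ^ (q - 2) with hSz'_def
    have hinner : ⟪((1 / (m * q) : ℝ) • ∑ i, (q * ‖z - Z i‖ ^ (q - 2)) • (z - Z i))
          - ((1 / (m * q) : ℝ) • ∑ i, (q * ‖z' - Z i‖ ^ (q - 2)) • (z' - Z i)), z - z'⟫
        = (1 / (m * q)) * ∑ i, q *
            ⟪(‖z - Z i‖ ^ (q - 2)) • (z - Z i) - (‖z' - Z i‖ ^ (q - 2)) • (z' - Z i), z - z'⟫ := by
      rw [← smul_sub, real_inner_smul_left, ← Finset.sum_sub_distrib, sum_inner]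
      congr 1
      apply Finset.sum_congr rfl
      intro i _
      rw [inner_sub_left, inner_sub_left, real_inner_smul_left, real_inner_smul_left,
        real_inner_smul_left, real_inner_smul_left]
      ring
    rw [hinner]
    have hterm : ∀ i : Fin m,
        ((‖z - Z i‖ ^ (q - 2) + ‖z' - Z i‖ ^ (q - 2)) / 2) * ‖z - z'‖ ^ 2
          ≤ ⟪(‖z - Z i‖ ^ (q - 2)) • (z - Z i) - (‖z' - Z i‖ ^ (q - 2)) • (z' - Z i), z - z'⟫ := by
      intro i
      have h := key_ineq (q - 2) (by linarith) (z - Z i) (z' - Z i)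
      have hab : (z - Z i) - (z' - Z i) = z - z' := by abel
      rwa [hab] at h
    have hsum : q * (((Sz + Sz') / 2) * ‖z - z'‖ ^ 2)
        ≤ ∑ i, q * ⟪(‖z - Z i‖ ^ (q - 2)) • (z - Z i)
            - (‖z' - Z i‖ ^ (q - 2)) • (z' - Z i), z - z'⟫ := by
      have h1 : ∑ i, q * (((‖z - Z i‖ ^ (q - 2) + ‖z' - Z i‖ ^ (q - 2)) / 2) * ‖z - z'‖ ^ 2)
          ≤ ∑ i, q * ⟪(‖z - Z i‖ ^ (q - 2)) • (z - Z i)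
              - (‖z' - Z i‖ ^ (q - 2)) • (z' - Z i), z - z'⟫ :=
        Finset.sum_le_sum fun i _ => mul_le_mul_of_nonneg_left (hterm i) hq0.le
      calc q * (((Sz + Sz') / 2) * ‖z - z'‖ ^ 2)
          = ∑ i, q * (((‖z - Z i‖ ^ (q - 2) + ‖z' - Z i‖ ^ (q - 2)) / 2) * ‖z - z'‖ ^ 2) := by
            rw [← Finset.mul_sum, ← Finset.sum_mul, ← Finset.sum_div, Finset.sum_add_distrib,
              hSz_def, hSz'_def]
        _ ≤ _ := h1
    have hSbound : Sc ≤ (Sz + Sz') / 2 := by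
      have := hc' z
      have := hc' z'
      rw [hSz_def, hSz'_def]
      linarith
    have hmu : (q - 2) * ((1 / (m * (q - 2))) * Sc) = Sc / m := by
      field_simp
    rw [hmu]
    have hmq : (0:ℝ) < 1 / (m * q) := by positivity
    calc Sc / m * ‖z - z'‖ ^ 2
        = (1 / (m * q)) * (q * (Sc * ‖z - z'‖ ^ 2)) := by
          field_simp
      _ ≤ (1 / (m * q)) * (q * (((Sz + Sz') / 2) * ‖z - z'‖ ^ 2)) := by
          have : Sc * ‖z - z'‖ ^ 2 ≤ ((Sz + Sz') / 2) * ‖z - z'‖ ^ 2 :=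
            mul_le_mul_of_nonneg_right hSbound (by positivity)
          exact mul_le_mul_of_nonneg_left (mul_le_mul_of_nonneg_left this hq0.le) hmq.le
      _ ≤ (1 / (m * q)) * ∑ i, q * ⟪(‖z - Z i‖ ^ (q - 2)) • (z - Z i)
            - (‖z' - Z i‖ ^ (q - 2)) • (z' - Z i), z - z'⟫ :=
          mul_le_mul_of_nonneg_left hsum hmq.le
end

section
/- Let D = {m_1,…,m_n} be a finite design in a metric space X with per-point minimax distances d_i = sup_{x ∈ X_i} ‖x − m_i‖, where X_i = {x ∈ X : ‖x − m_i‖ ≤ ‖x − m_j‖ for all j}, and let d* = max_i d_i be the overall minimax distance. If m_1 is replaced by any point m̃_1 with ‖m̃_1 − m_1‖ ≤ d* − d_1, then the overall minimax distance of the new design D̃ = {m̃_1, m_2,…,m_n} is at most d*. -/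
/-- If each point of a metric space X has a nearest design point
(Voronoi cells cover X), d i bounds the distance within the Voronoi cell of
design point i, d* bounds all the d i (d* = max_i d_i), and a design point
D i₀ is replaced by a point w with dist w (D i₀) ≤ d* - d i₀, then every
x ∈ X is within distance d* of the new design. -/
theorem minimax_invariant_update {n : ℕ} (hn : 0 < n)
    (X : Type*) [MetricSpace X] (D : Fin n → X)
    (d : Fin n → ℝ) (dstar : ℝ)
    (hcover : ∀ x : X, ∃ i, ∀ j, dist x (D i) ≤ dist x (D j))
    (hd : ∀ i, ∀ x : X, (∀ j, dist x (D i) ≤ dist x (D j)) → dist x (D i) ≤ d i)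
    (hdstar : ∀ i, d i ≤ dstar)
    (i₀ : Fin n) (w : X) (hw : dist w (D i₀) ≤ dstar - d i₀) :
    ∀ x : X, ∃ i, dist x (Function.update D i₀ w i) ≤ dstar := by
  intro x
  obtain ⟨i, hi⟩ := hcover x
  by_cases h : i = i₀
  · refine ⟨i₀, ?_⟩
    simp only [Function.update_self]
    calc dist x w ≤ dist x (D i₀) + dist (D i₀) w := dist_triangle _ _ _
    _ ≤ d i₀ + (dstar - d i₀) := by
        have := hd i₀ x (h ▸ hi)
        rw [dist_comm (D i₀) w]
        linarith
    _ = dstar := by ring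
  · refine ⟨i, ?_⟩
    rw [Function.update_of_ne h]
    exact le_trans (hd i x hi) (hdstar i)
end
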